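/- Let 0 < α < 1 and 0 < τ < 1. There exist a constant C > 0 and m ∈ ℕ such that for every x ∈ ℝ and every complex s with Re s > 0, |S̃(x, s)| ≤ C·(1 + |s|^m)/Re s, where S̃(x,s) = (1/(2s))·√((1 + τs^α)/(1 + s^α))·exp( −|x|·s·√((1 + τs^α)/(1 + s^α)) ). -/

import Mathlib

open Real Complex

set_option maxHeartbeats 1000000 in
/-- For `0 < α < 1`, `0 < τ < 1`, there exist `C > 0` and `m ∈ ℕ`
such that for all `x ∈ ℝ` and all `s` with `Re s > 0`,
`|S̃(x,s)| ≤ C (1 + |s|^m) / Re s`, where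
`S̃(x,s) = (1/(2s))·√((1+τs^α)/(1+s^α))·exp(−|x|·s·√((1+τs^α)/(1+s^α)))`. -/
theorem laplace_transform_fund_sol_bound
    (α τ : ℝ) (hα0 : 0 < α) (hα1 : α < 1) (hτ0 : 0 < τ) (hτ1 : τ < 1) :
    ∃ C : ℝ, 0 < C ∧ ∃ m : ℕ, ∀ x : ℝ, ∀ s : ℂ, 0 < s.re →
      ‖((1 / (2 * s)) *
        (((1 + (τ : ℂ) * s ^ (α : ℂ)) / (1 + s ^ (α : ℂ))) ^ (1/2 : ℂ)) *
        Complex.exp (-((|x| : ℝ) : ℂ) * s *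
          (((1 + (τ : ℂ) * s ^ (α : ℂ)) / (1 + s ^ (α : ℂ))) ^ (1/2 : ℂ))))‖
      ≤ C * (1 + ‖s‖ ^ m) / s.re := by
  refine ⟨2, by norm_num, 1, ?_⟩
  intro x s hs
  have hs0 : s ≠ 0 := by
    intro h; rw [h] at hs; simp at hs
  have hA : 0 < ‖s‖ := norm_pos_iff.mpr hs0
  have hπ := Real.pi_pos
  set θ := s.arg with hθdef
  clear_value θ
  have hθ : |θ| < π / 2 := by
    rw [hθdef]; exact Complex.abs_arg_lt_pi_div_two_iff.mpr (Or.inl hs)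
  obtain ⟨hθl, hθu⟩ := abs_lt.mp hθ
  set a := s ^ (α : ℂ) with hadef
  set E := Real.exp (Real.log (‖s‖) * α) with hEdef
  clear_value E
  have hE : 0 < E := by rw [hEdef]; exact Real.exp_pos _
  have hare : a.re = E * Real.cos (θ * α) := by
    rw [hadef, Complex.cpow_def_of_ne_zero hs0, Complex.exp_re, hEdef, hθdef]
    simp [Complex.mul_re, Complex.mul_im, Complex.log_re, Complex.log_im]
  have haim : a.im = E * Real.sin (θ * α) := by
    rw [hadef, Complex.cpow_def_of_ne_zero hs0, Complex.exp_im, hEdef, hθdef]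
    simp [Complex.mul_re, Complex.mul_im, Complex.log_re, Complex.log_im]
  have habsa : ‖a‖ = ‖s‖ ^ (α : ℝ) := by
    rw [hadef, Complex.norm_cpow_of_ne_zero hs0]; simp
  clear_value a
  have hαθ : |θ * α| < π / 2 := by
    rw [abs_mul, abs_of_pos hα0]
    calc |θ| * α ≤ |θ| * 1 := by nlinarith [abs_nonneg θ]
    _ < π / 2 := by simpa using hθ
  obtain ⟨hαθl, hαθu⟩ := abs_lt.mp hαθ
  have hcosαθ : 0 < Real.cos (θ * α) := Real.cos_pos_of_mem_Ioo ⟨hαθl, hαθu⟩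
  have hare_pos : 0 < a.re := by rw [hare]; positivity
  have hsre : s.re = ‖s‖ * Real.cos θ := by
    rw [hθdef, Complex.cos_arg hs0]; field_simp
  have hsim : s.im = ‖s‖ * Real.sin θ := by
    rw [hθdef, Complex.sin_arg]; field_simp
  have himsign : 0 ≤ s.im * a.im := by
    rw [haim, hsim]
    have hss : 0 ≤ Real.sin θ * Real.sin (θ * α) := by
      rcases le_or_gt 0 θ with h | h
      · exact mul_nonneg
          (Real.sin_nonneg_of_nonneg_of_le_pi h (by linarith))
          (Real.sin_nonneg_of_nonneg_of_le_pi (by nlinarith) (by linarith))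
      · have h1 : Real.sin θ ≤ 0 :=
          Real.sin_nonpos_of_nonpos_of_neg_pi_le h.le (by linarith)
        have h2 : Real.sin (θ * α) ≤ 0 :=
          Real.sin_nonpos_of_nonpos_of_neg_pi_le (by nlinarith) (by linarith)
        nlinarith
    calc (0:ℝ) ≤ ‖s‖ * E * (Real.sin θ * Real.sin (θ * α)) := by positivity
    _ = ‖s‖ * Real.sin θ * (E * Real.sin (θ * α)) := by ring
  set N := 1 + (τ:ℂ) * a with hN
  set D := 1 + a with hD
  have hNre : N.re = 1 + τ * a.re := by rw [hN]; simp
  have hNim : N.im = τ * a.im := by rw [hN]; simp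
  have hDre : D.re = 1 + a.re := by rw [hD]; simp
  have hDim : D.im = a.im := by rw [hD]; simp
  have habsN : ‖N‖ ≤ 2 + ‖s‖ := by
    have h1 : ‖a‖ ≤ 1 + ‖s‖ := by
      rw [habsa]
      rcases le_or_gt (‖s‖) 1 with h | h
      · have := Real.rpow_le_one (norm_nonneg s) h hα0.le
        linarith [norm_nonneg s]
      · have h2 : ‖s‖ ^ (α : ℝ) ≤ ‖s‖ ^ (1 : ℝ) :=
          Real.rpow_le_rpow_of_exponent_le h.le hα1.le
        rw [Real.rpow_one] at h2; linarith
    calc ‖N‖ ≤ ‖(1:ℂ)‖ + ‖(τ:ℂ) * a‖ := by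
          rw [hN]; exact norm_add_le _ _
    _ = 1 + τ * ‖a‖ := by
        rw [norm_mul, Complex.norm_real, Real.norm_eq_abs, abs_of_pos hτ0]; simp
    _ ≤ 2 + ‖s‖ := by nlinarith [norm_nonneg a]
  clear_value N D
  have hDrepos : 0 < D.re := by rw [hDre]; linarith
  have hD0 : D ≠ 0 := by
    intro h; rw [h] at hDrepos; simp at hDrepos
  have hnsD : 0 < Complex.normSq D := Complex.normSq_pos.mpr hD0
  have habsD : 1 ≤ ‖D‖ := by
    calc (1:ℝ) ≤ D.re := by rw [hDre]; linarith
    _ ≤ ‖D‖ := Complex.re_le_norm D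
  set q := N / D with hq
  have habsq : ‖q‖ ≤ 2 + ‖s‖ := by
    rw [hq, norm_div]
    calc ‖N‖ / ‖D‖ ≤ ‖N‖ :=
          div_le_self (norm_nonneg N) habsD
    _ ≤ 2 + ‖s‖ := habsN
  have hqre : 0 < q.re := by
    rw [hq, Complex.div_re, ← add_div]
    apply div_pos _ hnsD
    rw [hNre, hNim, hDre, hDim]
    have h1 : 0 < (1 + τ * a.re) * (1 + a.re) :=
      mul_pos (by nlinarith [mul_pos hτ0 hare_pos]) (by linarith)
    nlinarith [mul_nonneg hτ0.le (mul_self_nonneg a.im)]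
  have hsqre : 0 ≤ (s * q).re := by
    have h1 : s * q = (s * N) / D := by rw [hq]; ring
    rw [h1, Complex.div_re, ← add_div]
    apply div_nonneg _ hnsD.le
    rw [Complex.mul_re, Complex.mul_im, hNre, hNim, hDre, hDim]
    nlinarith [mul_pos hs hare_pos, mul_nonneg (mul_nonneg hs.le hτ0.le) (mul_self_nonneg a.im),
      mul_nonneg himsign (by linarith : (0:ℝ) ≤ 1 - τ),
      mul_nonneg (mul_nonneg (mul_nonneg hs.le hτ0.le) hare_pos.le) hare_pos.le]
  clear_value q
  have hq0 : q ≠ 0 := by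
    intro h; rw [h] at hqre; simp at hqre
  have hAq : 0 < ‖q‖ := norm_pos_iff.mpr hq0
  set ψ := q.arg with hψdef
  clear_value ψ
  have hψ : |ψ| < π / 2 := by
    rw [hψdef]; exact Complex.abs_arg_lt_pi_div_two_iff.mpr (Or.inl hqre)
  obtain ⟨hψl, hψu⟩ := abs_lt.mp hψ
  set w := q ^ (1/2 : ℂ) with hwdef
  set F := Real.exp (Real.log (‖q‖) * (1/2)) with hFdef
  clear_value F
  have hF : 0 < F := by rw [hFdef]; exact Real.exp_pos _
  have hwre : w.re = F * Real.cos (ψ * (1/2)) := by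
    rw [hwdef, Complex.cpow_def_of_ne_zero hq0, Complex.exp_re, hFdef, hψdef]
    norm_num [Complex.mul_re, Complex.mul_im, Complex.log_re, Complex.log_im]
  have hwim : w.im = F * Real.sin (ψ * (1/2)) := by
    rw [hwdef, Complex.cpow_def_of_ne_zero hq0, Complex.exp_im, hFdef, hψdef]
    norm_num [Complex.mul_re, Complex.mul_im, Complex.log_re, Complex.log_im]
  have habsw : ‖w‖ = ‖q‖ ^ ((1:ℝ)/2) := by
    rw [hwdef, Complex.norm_cpow_of_ne_zero hq0]
    norm_num
  clear_value w
  have hqre' : q.re = ‖q‖ * Real.cos ψ := by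
    rw [hψdef, Complex.cos_arg hq0]; field_simp
  have hqim' : q.im = ‖q‖ * Real.sin ψ := by
    rw [hψdef, Complex.sin_arg]; field_simp
  have hcosθψ : 0 ≤ Real.cos (θ + ψ) := by
    have h1 : (s * q).re = ‖s‖ * ‖q‖ * Real.cos (θ + ψ) := by
      rw [Complex.mul_re, hsre, hsim, hqre', hqim', Real.cos_add]; ring
    rw [h1] at hsqre
    nlinarith [mul_pos hA hAq]
  have hsum_le : θ + ψ ≤ π / 2 := by
    by_contra h
    push_neg at h
    have h2 : Real.cos (θ + ψ) < 0 :=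
      Real.cos_neg_of_pi_div_two_lt_of_lt h (by linarith)
    linarith
  have hsum_ge : -(π / 2) ≤ θ + ψ := by
    by_contra h
    push_neg at h
    have h2 : Real.cos (-(θ + ψ)) < 0 :=
      Real.cos_neg_of_pi_div_two_lt_of_lt (by linarith) (by linarith)
    rw [Real.cos_neg] at h2
    linarith
  have hcoshalf : 0 ≤ Real.cos (θ + ψ * (1/2)) :=
    Real.cos_nonneg_of_mem_Icc ⟨by linarith, by linarith⟩
  have hswre : 0 ≤ (s * w).re := by
    rw [Complex.mul_re, hsre, hsim, hwre, hwim]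
    have key : ‖s‖ * Real.cos θ * (F * Real.cos (ψ * (1/2))) -
        ‖s‖ * Real.sin θ * (F * Real.sin (ψ * (1/2))) =
        ‖s‖ * F * Real.cos (θ + ψ * (1/2)) := by
      rw [Real.cos_add]; ring
    rw [key]
    positivity
  have hexp : ‖Complex.exp (-((|x| : ℝ) : ℂ) * s * w)‖ ≤ 1 := by
    rw [Complex.norm_exp]
    have h1 : -((|x| : ℝ) : ℂ) * s * w = ((-|x| : ℝ) : ℂ) * (s * w) := by
      push_cast; ring
    rw [h1, Complex.re_ofReal_mul, Real.exp_le_one_iff]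
    exact mul_nonpos_of_nonpos_of_nonneg (by simp [abs_nonneg]) hswre
  have habsw_le : ‖w‖ ≤ 3 + ‖s‖ := by
    rw [habsw]
    rcases le_or_gt (‖q‖) 1 with h | h
    · have h3 : ‖q‖ ^ ((1:ℝ)/2) ≤ 1 :=
        Real.rpow_le_one (norm_nonneg q) h (by norm_num)
      linarith [norm_nonneg s]
    · have h2 : ‖q‖ ^ ((1:ℝ)/2) ≤ ‖q‖ ^ (1 : ℝ) :=
        Real.rpow_le_rpow_of_exponent_le h.le (by norm_num)
      rw [Real.rpow_one] at h2; linarith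
  have habsinv : ‖1 / (2 * s)‖ = 1 / (2 * ‖s‖) := by
    rw [norm_div, norm_mul]; simp
  rw [norm_mul, norm_mul, habsinv, pow_one]
  calc 1 / (2 * ‖s‖) * ‖w‖ *
      ‖Complex.exp (-((|x| : ℝ) : ℂ) * s * w)‖
      ≤ 1 / (2 * ‖s‖) * (3 + ‖s‖) * 1 := by
        gcongr
    _ = (3 + ‖s‖) / (2 * ‖s‖) := by ring
    _ ≤ 2 * (1 + ‖s‖) / s.re := by
        rw [div_le_div_iff₀ (by positivity) hs]
        have t1 : (3 + ‖s‖) * s.re ≤ (3 + ‖s‖) * ‖s‖ :=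
          mul_le_mul_of_nonneg_left (Complex.re_le_norm s) (by positivity)
        have t2 : 0 ≤ ‖s‖ * ‖s‖ := mul_self_nonneg _
        calc (3 + ‖s‖) * s.re ≤ (3 + ‖s‖) * ‖s‖ := t1
        _ = 3 * ‖s‖ + ‖s‖ * ‖s‖ := by ring
        _ ≤ 4 * ‖s‖ + 4 * (‖s‖ * ‖s‖) := by linarith
        _ = 2 * (1 + ‖s‖) * (2 * ‖s‖) := by ring
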